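/- In the robot domain with scenario σ1 = [comm(I0,Succ), move(I0,I1,NotVul), move(I1,I2,Vul), move(I2,I3,NotVul)] executed from S0, the following hold for the effect φ1 = Vul: the action comm(I0,Succ) at timestamp 0 is not a cause; move(I0,I1,NotVul) at timestamp 1 is a cause; move(I1,I2,Vul) at timestamp 2 is a cause; and move(I2,I3,NotVul) at timestamp 3 is not a cause. -/

import Mathlib

inductive Loc | I0 | I1 | I2 | I3
deriving DecidableEq

inductive React | Vul | NotVul | Succ
deriving DecidableEq

inductive SysAct
  | move : Loc → Loc → React → SysAct
  | comm : Loc → React → SysAct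
deriving DecidableEq

/-- A situation is the list of system actions executed so far, most recent first; `S0 = []`. -/
abbrev Sit := List SysAct

def doAct (a : SysAct) (s : Sit) : Sit := a :: s

def time (s : Sit) : ℕ := s.length

def SubHist (s1 s2 : Sit) : Prop := s1 <:+ s2

def PSubHist (s1 s2 : Sit) : Prop := s1 <:+ s2 ∧ s1 ≠ s2

def Connected (i j : Loc) : Prop :=
  (i = .I0 ∧ j = .I1) ∨ (i = .I1 ∧ j = .I0) ∨
  (i = .I1 ∧ j = .I2) ∨ (i = .I2 ∧ j = .I1) ∨
  (i = .I2 ∧ j = .I3) ∨ (i = .I3 ∧ j = .I2)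

def At : Loc → Sit → Prop
  | j, [] => j = .I0
  | j, a :: s => (∃ i e, a = .move i j e) ∨ (At j s ∧ ∀ j' e', a ≠ .move j j' e')

def VulF : Sit → Prop
  | [] => False
  | a :: s => (∃ i j, a = .move i j .Vul) ∨ VulF s

def Risky (i : Loc) (_ : Sit) : Prop := i = .I1 ∨ i = .I2

def Poss : SysAct → Sit → Prop
  | .move i j e, s => At i s ∧ Connected i j ∧
      (Risky j s → (e = .Vul ∨ e = .NotVul)) ∧ (¬ Risky j s → e = .NotVul)
  | .comm i e, s => ¬ VulF s ∧ ¬ Risky i s ∧ e = .Succ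

def CausesDirectly (a : SysAct) (ts : ℕ) (φ : Sit → Prop) (s : Sit) : Prop :=
  ∃ s_a : Sit, time s_a = ts ∧ PSubHist [] (doAct a s_a) ∧ SubHist (doAct a s_a) s ∧
    ¬ φ s_a ∧ ∀ s', SubHist (doAct a s_a) s' → SubHist s' s → φ s'

inductive Causes : SysAct → ℕ → (Sit → Prop) → Sit → Prop
  | direct {a : SysAct} {ts : ℕ} {φ : Sit → Prop} {s : Sit} :
      CausesDirectly a ts φ s → Causes a ts φ s
  | indirect {a : SysAct} {ts : ℕ} {φ : Sit → Prop} {s : Sit}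
      (a' : SysAct) (ts' : ℕ) (s' : Sit) :
      CausesDirectly a' ts' φ s → time s' = ts' → PSubHist s' s →
      Causes a ts (fun σ => Poss a' σ ∧ φ (doAct a' σ)) s' →
      Causes a ts φ s

/-- The scenario σ1, as a situation (most recent action first). -/
def sigma1 : Sit :=
  [.move .I2 .I3 .NotVul, .move .I1 .I2 .Vul, .move .I0 .I1 .NotVul, .comm .I0 .Succ]

-- auxiliary
lemma vulF_suffix {t s : Sit} (h : t <:+ s) (hv : VulF t) : VulF s := by
  obtain ⟨l, rfl⟩ := h
  induction l with
  | nil => exact hv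
  | cons a l ih => exact Or.inr ih

def phi1 : Sit → Prop :=
  fun σ => Poss (.move .I1 .I2 .Vul) σ ∧ VulF (doAct (.move .I1 .I2 .Vul) σ)

def phi2 : Sit → Prop :=
  fun σ => Poss (.move .I0 .I1 .NotVul) σ ∧ phi1 (doAct (.move .I0 .I1 .NotVul) σ)

lemma directA {a ts} (h : CausesDirectly a ts VulF sigma1) :
    a = .move .I1 .I2 .Vul ∧ ts = 2 := by
  obtain ⟨s_a, htime, _, hsuf, hnot, hall⟩ := h
  simp only [SubHist, doAct, sigma1, List.suffix_cons_iff, List.suffix_nil] at hsuf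
  rcases hsuf with h | h | h | h | h
  · cases h; exact absurd (by simp [VulF]) hnot
  · cases h; exact ⟨rfl, htime.symm⟩
  · cases h
    exact absurd (hall _ (List.suffix_refl _) (by simp [sigma1]; exact ⟨[.move .I2 .I3 .NotVul, .move .I1 .I2 .Vul], rfl⟩)) (by simp [VulF, doAct])
  · cases h
    exact absurd (hall _ (List.suffix_refl _) (by exact ⟨[.move .I2 .I3 .NotVul, .move .I1 .I2 .Vul, .move .I0 .I1 .NotVul], rfl⟩)) (by simp [VulF, doAct])
  · cases h

lemma directB {a ts} (h : CausesDirectly a ts phi1 [.move .I0 .I1 .NotVul, .comm .I0 .Succ]) :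
    a = .move .I0 .I1 .NotVul ∧ ts = 1 := by
  obtain ⟨s_a, htime, _, hsuf, hnot, hall⟩ := h
  simp only [SubHist, doAct, List.suffix_cons_iff, List.suffix_nil] at hsuf
  rcases hsuf with h | h | h
  · cases h; exact ⟨rfl, htime.symm⟩
  · cases h
    have := hall _ (List.suffix_refl _) ⟨[.move .I0 .I1 .NotVul], rfl⟩
    simp [phi1, Poss, At, doAct] at this
  · cases h

lemma phi2_nil : phi2 [] := by
  refine ⟨?_, ?_, ?_⟩ <;> simp [phi1, phi2, Poss, At, Connected, Risky, VulF, doAct]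

lemma no_direct_comm {φ : Sit → Prop} (hφ : φ []) {a ts} :
    ¬ CausesDirectly a ts φ [SysAct.comm .I0 .Succ] := by
  rintro ⟨s_a, htime, _, hsuf, hnot, hall⟩
  simp only [SubHist, doAct, List.suffix_cons_iff, List.suffix_nil] at hsuf
  rcases hsuf with h | h
  · cases h; exact hnot hφ
  · cases h

lemma no_causes_comm {φ : Sit → Prop} (hφ : φ []) {a ts} :
    ¬ Causes a ts φ [SysAct.comm .I0 .Succ] := by
  intro h
  cases h with
  | direct hd => exact no_direct_comm hφ hd
  | indirect a' ts' s' hd _ _ _ => exact no_direct_comm hφ hd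

lemma causesB {a ts} (h : Causes a ts phi1 [.move .I0 .I1 .NotVul, .comm .I0 .Succ]) :
    a = .move .I0 .I1 .NotVul ∧ ts = 1 := by
  cases h with
  | direct hd => exact directB hd
  | indirect a' ts' s' hd ht hps hc =>
    obtain ⟨rfl, rfl⟩ := directB hd
    obtain ⟨hsuf, hne⟩ := hps
    simp only [List.suffix_cons_iff, List.suffix_nil] at hsuf
    rcases hsuf with h | h | h
    · exact absurd h hne
    · subst h; exact absurd hc (no_causes_comm phi2_nil)
    · subst h; simp [time] at ht

lemma causesA {a ts} (h : Causes a ts VulF sigma1) :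
    (a = .move .I1 .I2 .Vul ∧ ts = 2) ∨ (a = .move .I0 .I1 .NotVul ∧ ts = 1) := by
  cases h with
  | direct hd => exact Or.inl (directA hd)
  | indirect a' ts' s' hd ht hps hc =>
    obtain ⟨rfl, rfl⟩ := directA hd
    obtain ⟨hsuf, hne⟩ := hps
    simp only [sigma1, List.suffix_cons_iff, List.suffix_nil] at hsuf
    rcases hsuf with h | h | h | h | h
    · exact absurd h (by simpa [sigma1] using hne)
    · subst h; simp [time] at ht
    · subst h; exact Or.inr (causesB hc)
    · subst h; simp [time] at ht
    · subst h; simp [time] at ht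

lemma direct_m12 : CausesDirectly (.move .I1 .I2 .Vul) 2 VulF sigma1 := by
  refine ⟨[.move .I0 .I1 .NotVul, .comm .I0 .Succ], rfl, ⟨List.nil_suffix, by simp [doAct]⟩,
    ⟨[.move .I2 .I3 .NotVul], by simp [sigma1, doAct]⟩, by simp [VulF], ?_⟩
  intro s' h1 _
  exact vulF_suffix h1 (by simp [doAct, VulF])

lemma direct_m01 : CausesDirectly (.move .I0 .I1 .NotVul) 1 phi1
    [.move .I0 .I1 .NotVul, .comm .I0 .Succ] := by
  refine ⟨[.comm .I0 .Succ], rfl, ⟨List.nil_suffix, by simp [doAct]⟩,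
    List.suffix_refl _, ?_, ?_⟩
  · simp [phi1, Poss, At]
  · intro s' h1 h2
    have : s' = [SysAct.move .I0 .I1 .NotVul, .comm .I0 .Succ] := h2.eq_of_length_le (h1.length_le)
    subst this
    refine ⟨?_, ?_⟩ <;> simp [phi1, Poss, At, Connected, Risky, VulF, doAct]

theorem robot_causes_sigma1 :
    ¬ Causes (.comm .I0 .Succ) 0 VulF sigma1 ∧
    Causes (.move .I0 .I1 .NotVul) 1 VulF sigma1 ∧
    Causes (.move .I1 .I2 .Vul) 2 VulF sigma1 ∧
    ¬ Causes (.move .I2 .I3 .NotVul) 3 VulF sigma1 := by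
  refine ⟨?_, ?_, ?_, ?_⟩
  · intro h; rcases causesA h with ⟨h1, _⟩ | ⟨h1, _⟩ <;> exact absurd h1 (by simp)
  · exact Causes.indirect _ 2 [.move .I0 .I1 .NotVul, .comm .I0 .Succ] direct_m12 rfl
      ⟨⟨[.move .I2 .I3 .NotVul, .move .I1 .I2 .Vul], by simp [sigma1]⟩, by simp [sigma1]⟩ (Causes.direct direct_m01)
  · exact Causes.direct direct_m12
  · intro h; rcases causesA h with ⟨h1, _⟩ | ⟨h1, _⟩ <;> exact absurd h1 (by simp)
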